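/- The polynomial 50Z^4 + 300Z^3 + 685Z^2 + 720Z + 302 is irreducible over Q and its splitting field is Q(√2, i√15), a degree-4 extension of Q. -/

import Mathlib

open Polynomial

/-- `ℚ(√2, i√15)` as a subfield of `ℂ`. -/
noncomputable def Kfield11 : IntermediateField ℚ ℂ :=
  IntermediateField.adjoin ℚ
    ({((Real.sqrt 2 : ℝ) : ℂ), Complex.I * ((Real.sqrt 15 : ℝ) : ℂ)} : Set ℂ)

namespace Stmt11Aux

open IntermediateField Module

noncomputable section

def a : ℂ := ((Real.sqrt 2 : ℝ) : ℂ)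
def t : ℂ := Complex.I * ((Real.sqrt 15 : ℝ) : ℂ)
def r1 : ℂ := (-6+a)/4 + t*(2+a)/20
def r2 : ℂ := (-6+a)/4 - t*(2+a)/20
def r3 : ℂ := (-6-a)/4 + t*(2-a)/20
def r4 : ℂ := (-6-a)/4 - t*(2-a)/20

def P : ℚ[X] := 50 * X ^ 4 + 300 * X ^ 3 + 685 * X ^ 2 + 720 * X + 302

lemma ha : a^2 = 2 := by
  simp [a, ← Complex.ofReal_pow, Real.sq_sqrt]

lemma ht : t^2 = -15 := by
  simp [t, mul_pow, Complex.I_sq, ← Complex.ofReal_pow, Real.sq_sqrt]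

lemma factorC : P.map (algebraMap ℚ ℂ) =
    C 50 * (((Multiset.map (fun r => X - C r) {r1, r2, r3, r4}).prod)) := by
  apply Polynomial.funext
  intro x
  simp only [P, Multiset.insert_eq_cons, Multiset.map_cons, Multiset.map_singleton,
    Multiset.prod_cons, Multiset.prod_singleton, eval_mul, eval_C, eval_sub, eval_X,
    Polynomial.eval_map, eval₂_add, eval₂_mul, eval₂_pow, eval₂_X, eval₂_ofNat]
  simp only [r1, r2, r3, r4]
  linear_combination ((875/64 : ℂ) + (45/32)*t^2 + (3/1600)*t^4 + (-25/128)*a^2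
      + (1/64)*a^2*t^2 + (-1/3200)*a^2*t^4 + (75/4)*x + (5/4)*x*t^2 + (25/4)*x^2
      + (1/4)*x^2*t^2) * ha
    + ((813/160 : ℂ) + (-1/800)*t^2 + (11/2)*x + (3/2)*x^2) * ht

lemma rootSetP : P.rootSet ℂ = {r1, r2, r3, r4} := by
  rw [Polynomial.rootSet, aroots_def, factorC, roots_C_mul _ (by norm_num),
    roots_multiset_prod_X_sub_C]
  ext z
  simp [Multiset.insert_eq_cons]

lemma adjoin_roots : adjoin ℚ ({r1, r2, r3, r4} : Set ℂ) = adjoin ℚ {a, t} := by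
  apply le_antisymm
  · rw [adjoin_le_iff]
    have hA : a ∈ adjoin ℚ ({a, t} : Set ℂ) := subset_adjoin _ _ (by simp)
    have hT : t ∈ adjoin ℚ ({a, t} : Set ℂ) := subset_adjoin _ _ (by simp)
    have h6 : (-6:ℂ) ∈ adjoin ℚ ({a, t} : Set ℂ) := neg_mem (ofNat_mem _ _)
    have h2' : (2:ℂ) ∈ adjoin ℚ ({a, t} : Set ℂ) := ofNat_mem _ _
    have h4' : (4:ℂ) ∈ adjoin ℚ ({a, t} : Set ℂ) := ofNat_mem _ _
    have h20 : (20:ℂ) ∈ adjoin ℚ ({a, t} : Set ℂ) := ofNat_mem _ _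
    rintro z (rfl|rfl|rfl|rfl)
    · exact add_mem (div_mem (add_mem h6 hA) h4') (div_mem (mul_mem hT (add_mem h2' hA)) h20)
    · exact sub_mem (div_mem (add_mem h6 hA) h4') (div_mem (mul_mem hT (add_mem h2' hA)) h20)
    · exact add_mem (div_mem (sub_mem h6 hA) h4') (div_mem (mul_mem hT (sub_mem h2' hA)) h20)
    · exact sub_mem (div_mem (sub_mem h6 hA) h4') (div_mem (mul_mem hT (sub_mem h2' hA)) h20)
  · rw [adjoin_le_iff]
    have h1 : r1 ∈ adjoin ℚ ({r1, r2, r3, r4} : Set ℂ) := subset_adjoin _ _ (by simp)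
    have h2 : r2 ∈ adjoin ℚ ({r1, r2, r3, r4} : Set ℂ) := subset_adjoin _ _ (by simp)
    have h3 : r3 ∈ adjoin ℚ ({r1, r2, r3, r4} : Set ℂ) := subset_adjoin _ _ (by simp)
    have h4 : r4 ∈ adjoin ℚ ({r1, r2, r3, r4} : Set ℂ) := subset_adjoin _ _ (by simp)
    rintro z (rfl|rfl)
    · have : a = r1 + r2 - r3 - r4 := by simp [r1, r2, r3, r4]; ring
      rw [this]; exact sub_mem (sub_mem (add_mem h1 h2) h3) h4
    · have : t = (5/2) * (r1 - r2 + r3 - r4) := by simp [r1, r2, r3, r4]; ring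
      rw [this]
      exact mul_mem (div_mem (ofNat_mem _ _) (ofNat_mem _ _))
        (sub_mem (add_mem (sub_mem h1 h2) h3) h4)

/-! ### Degree computations -/

lemma sq_ne_two (b : ℚ) : b ^ 2 ≠ 2 := by
  intro hb
  have h2 : ((b:ℝ)) ^ 2 = 2 := by exact_mod_cast congrArg (Rat.cast : ℚ → ℝ) hb
  have : Real.sqrt 2 = ((|b| : ℚ) : ℝ) := by
    rw [← h2, Real.sqrt_sq_eq_abs]; push_cast; ring
  exact irrational_sqrt_two ⟨|b|, this.symm⟩

lemma irr2 : Irreducible (X ^ 2 - C (2:ℚ)) :=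
  X_pow_sub_C_irreducible_of_prime Nat.prime_two sq_ne_two

lemma minpoly_a : minpoly ℚ a = X ^ 2 - C 2 := by
  refine (minpoly.eq_of_irreducible_of_monic irr2 ?_ (monic_X_pow_sub_C _ two_ne_zero)).symm
  simp [ha]

lemma int_a : IsIntegral ℚ a := ⟨X ^ 2 - C 2, monic_X_pow_sub_C _ two_ne_zero, by simp [ha]⟩

def A : IntermediateField ℚ ℂ := ℚ⟮a⟯

lemma finrank_A : finrank ℚ A = 2 := by
  rw [A, adjoin.finrank int_a, minpoly_a, natDegree_X_pow_sub_C]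

/-- the reals as an intermediate field of `ℚ ⊆ ℂ` -/
def realIF : IntermediateField ℚ ℂ :=
  Subfield.toIntermediateField Complex.ofRealHom.fieldRange (fun q => ⟨q, by simp⟩)

lemma A_le_real : A ≤ realIF := by
  rw [A, adjoin_le_iff]
  rintro z rfl
  exact ⟨Real.sqrt 2, rfl⟩

lemma sq_ne_neg15 (b : A) : b ^ 2 ≠ -15 := by
  intro hb
  obtain ⟨y, hy⟩ := A_le_real b.2
  have hyc : (y : ℂ) ^ 2 = -15 := by
    have : ((b ^ 2 : A) : ℂ) = ((-15 : A) : ℂ) := congrArg _ hb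
    push_cast at this
    rw [show ((15:A):ℂ) = 15 from rfl] at this
    rw [← this, show (y:ℂ) = (b:ℂ) from hy]
  have : y ^ 2 = -15 := by exact_mod_cast hyc
  nlinarith [sq_nonneg y]

lemma irr15 : Irreducible (X ^ 2 - C (-15 : A)) :=
  X_pow_sub_C_irreducible_of_prime Nat.prime_two sq_ne_neg15

lemma algA (x : A) : algebraMap A ℂ x = (x : ℂ) := rfl

lemma minpoly_t : minpoly A t = X ^ 2 - C (-15) := by
  refine (minpoly.eq_of_irreducible_of_monic irr15 ?_ (monic_X_pow_sub_C _ two_ne_zero)).symm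
  simp only [map_sub, map_pow, aeval_X, aeval_C, algA, ht]
  push_cast
  rw [show ((15:A):ℂ) = 15 from rfl]
  ring

lemma int_t : IsIntegral A t :=
  ⟨X ^ 2 - C (-15), monic_X_pow_sub_C _ two_ne_zero, by
    simp only [eval₂_sub, eval₂_pow, eval₂_X, eval₂_C, ht]
    rw [show (algebraMap A ℂ) (-15) = ((-15 : A) : ℂ) from rfl]
    push_cast
    rw [show ((15:A):ℂ) = 15 from rfl]
    ring⟩

lemma hAK : A ≤ adjoin ℚ ({a, t} : Set ℂ) := by
  rw [A]
  exact adjoin.mono _ _ _ (by simp)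

lemma ext_eq : extendScalars hAK = adjoin A {t} := by
  rw [extendScalars_adjoin hAK]
  apply le_antisymm
  · rw [adjoin_le_iff]
    rintro z (rfl|rfl)
    · exact (adjoin A ({t} : Set ℂ)).algebraMap_mem ⟨a, by rw [A]; exact mem_adjoin_simple_self ℚ a⟩
    · exact subset_adjoin _ _ rfl
  · exact adjoin.mono _ _ _ (by simp)

lemma finrank_ext : finrank A (extendScalars hAK) = 2 := by
  rw [ext_eq, show (adjoin A ({t} : Set ℂ)) = A⟮t⟯ from rfl, adjoin.finrank int_t, minpoly_t,
    natDegree_X_pow_sub_C]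

lemma finrank_K : finrank ℚ (adjoin ℚ ({a, t} : Set ℂ)) = 4 := by
  have := finrank_bot_mul_relfinrank hAK
  rw [relfinrank_eq_finrank_of_le hAK, finrank_ext, finrank_A] at this
  omega

/-! ### Irreducibility -/

lemma aeval_r1 : aeval r1 P = 0 := by
  rw [aeval_def, ← eval_map, factorC]
  simp [Multiset.insert_eq_cons]

lemma hP0 : P ≠ 0 := by
  intro h
  have := congrArg (fun q => coeff q 0) h
  simp [P, coeff_add, coeff_X_pow] at this

lemma hPdeg : P.natDegree = 4 := by
  unfold P
  compute_degree!

lemma int_r1 : IsIntegral ℚ r1 := (IsAlgebraic.isIntegral ⟨P, hP0, aeval_r1⟩)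

lemma r1_mem : r1 ∈ adjoin ℚ ({a, t} : Set ℂ) := by
  rw [← adjoin_roots]
  exact subset_adjoin _ _ (by simp)

lemma r1_eq : r1 = Complex.ofReal ((-6+Real.sqrt 2)/4)
    + Complex.I * Complex.ofReal (Real.sqrt 15 * (2+Real.sqrt 2)/20) := by
  simp only [r1, a, t]
  push_cast
  ring

lemma r1_im_ne : r1.im ≠ 0 := by
  rw [r1_eq]
  simp only [Complex.add_im, Complex.ofReal_im, Complex.mul_im, Complex.I_re, Complex.I_im,
    Complex.ofReal_re, zero_mul, one_mul, zero_add]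
  have h15 : 0 < Real.sqrt 15 := Real.sqrt_pos.2 (by norm_num)
  have h2 : 0 ≤ Real.sqrt 2 := Real.sqrt_nonneg 2
  positivity

lemma minpoly_natDegree_ne_one : (minpoly ℚ r1).natDegree ≠ 1 := by
  intro hd
  have hmon := minpoly.monic int_r1
  have hc1 : (minpoly ℚ r1).coeff 1 = 1 := by
    have := hmon.coeff_natDegree
    rwa [hd] at this
  have he := minpoly.aeval ℚ r1
  rw [aeval_eq_sum_range, hd] at he
  simp only [Finset.sum_range_succ, Finset.sum_range_zero, zero_add, pow_zero, pow_one,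
    hc1, one_smul] at he
  -- he : (coeff 0) • 1 + r1 = 0
  have : r1 = Complex.ofReal (-((minpoly ℚ r1).coeff 0 : ℝ)) := by
    rw [Rat.smul_one_eq_cast] at he
    push_cast
    linear_combination he
  have := congrArg Complex.im this
  simp only [Complex.ofReal_im] at this
  exact r1_im_ne this

lemma minpoly_natDegree_ne_two : (minpoly ℚ r1).natDegree ≠ 2 := by
  intro hd
  have hmon := minpoly.monic int_r1
  have hc2 : (minpoly ℚ r1).coeff 2 = 1 := by
    have := hmon.coeff_natDegree
    rwa [hd] at this
  set c1 : ℚ := (minpoly ℚ r1).coeff 1 with hc1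
  set c0 : ℚ := (minpoly ℚ r1).coeff 0 with hc0
  have he := minpoly.aeval ℚ r1
  rw [aeval_eq_sum_range, hd] at he
  simp only [Finset.sum_range_succ, Finset.sum_range_zero, zero_add, pow_zero, pow_one,
    hc2, one_smul, ← hc1, ← hc0] at he
  -- he : c0 • 1 + c1 • r1 + r1 ^ 2 = 0
  have he' : (c0 : ℂ) + (c1 : ℂ) * r1 + r1 ^ 2 = 0 := by
    rw [Rat.smul_one_eq_cast, Rat.smul_def] at he
    exact he
  rw [r1_eq] at he'
  have him := congrArg Complex.im he'
  set x : ℝ := (-6+Real.sqrt 2)/4 with hx_def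
  set y : ℝ := Real.sqrt 15 * (2+Real.sqrt 2)/20 with hy_def
  have hy : y ≠ 0 := by
    rw [hy_def]
    have h15 : 0 < Real.sqrt 15 := Real.sqrt_pos.2 (by norm_num)
    have h2 : (0:ℝ) ≤ Real.sqrt 2 := Real.sqrt_nonneg 2
    positivity
  simp only [Complex.add_im, Complex.mul_im, Complex.mul_re, Complex.add_re, Complex.I_re,
    Complex.I_im, Complex.ofReal_re, Complex.ofReal_im, Complex.ratCast_re, Complex.ratCast_im,
    Complex.zero_im, pow_two] at him
  have hlin : y * ((c1 : ℝ) + 2 * x) = 0 := by linarith [him]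
  have hc1x : (c1 : ℝ) = -2 * x := by
    rcases mul_eq_zero.1 hlin with h | h
    · exact absurd h hy
    · linarith
  have hsqrt : Real.sqrt 2 = ((6 - 2 * c1 : ℚ) : ℝ) := by
    have hx : x = (-6+Real.sqrt 2)/4 := rfl
    push_cast
    rw [hx] at hc1x
    linarith
  exact irrational_sqrt_two ⟨6 - 2 * c1, hsqrt.symm⟩

lemma minpoly_natDegree_dvd : (minpoly ℚ r1).natDegree ∣ 4 := by
  have hle : ℚ⟮r1⟯ ≤ adjoin ℚ ({a, t} : Set ℂ) := by
    rw [adjoin_le_iff]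
    rintro z rfl
    exact r1_mem
  have := finrank_bot_mul_relfinrank hle
  rw [finrank_K, adjoin.finrank int_r1] at this
  exact ⟨_, this.symm⟩

lemma minpoly_natDegree_eq : (minpoly ℚ r1).natDegree = 4 := by
  have h1 := minpoly_natDegree_ne_one
  have h2 := minpoly_natDegree_ne_two
  have hd := minpoly_natDegree_dvd
  have hmem : (minpoly ℚ r1).natDegree ∈ Nat.divisors 4 := Nat.mem_divisors.2 ⟨hd, by norm_num⟩
  have : Nat.divisors 4 = {1, 2, 4} := by decide
  rw [this] at hmem
  simp only [Finset.mem_insert, Finset.mem_singleton] at hmem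
  rcases hmem with h | h | h <;> first | exact absurd h h1 | exact absurd h h2 | exact h

lemma irreducible_P : Irreducible P := by
  have hdvd : minpoly ℚ r1 ∣ P := minpoly.dvd ℚ r1 aeval_r1
  obtain ⟨q, hq⟩ := hdvd
  have hq0 : q ≠ 0 := by
    rintro rfl
    exact hP0 (by simpa using hq)
  have hm0 : minpoly ℚ r1 ≠ 0 := minpoly.ne_zero int_r1
  have hdeg : q.natDegree = 0 := by
    have := congrArg natDegree hq
    rw [natDegree_mul hm0 hq0, hPdeg, minpoly_natDegree_eq] at this
    omega
  have hcoeff : q.coeff 0 ≠ 0 := fun h =>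
    hq0 (by rw [eq_C_of_natDegree_eq_zero hdeg, h, map_zero])
  have hu : IsUnit q := by
    rw [eq_C_of_natDegree_eq_zero hdeg]
    exact isUnit_C.2 (isUnit_iff_ne_zero.2 hcoeff)
  exact (Associated.irreducible ⟨hu.unit, by rw [IsUnit.unit_spec, ← hq]⟩
    (minpoly.irreducible int_r1))

end

end Stmt11Aux

theorem stmt_11 :
    Irreducible (50 * X ^ 4 + 300 * X ^ 3 + 685 * X ^ 2 + 720 * X + 302 : ℚ[X]) ∧
    Module.finrank ℚ Kfield11 = 4 ∧
    Nonempty ((50 * X ^ 4 + 300 * X ^ 3 + 685 * X ^ 2 + 720 * X + 302 : ℚ[X]).SplittingField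
      ≃ₐ[ℚ] Kfield11) := by
  refine ⟨Stmt11Aux.irreducible_P, Stmt11Aux.finrank_K, ?_⟩
  have hsplit : (Stmt11Aux.P.map (algebraMap ℚ ℂ)).Splits := IsAlgClosed.splits _
  have hsf := IntermediateField.adjoin_rootSet_isSplittingField (L := ℂ) hsplit
  rw [Stmt11Aux.rootSetP, Stmt11Aux.adjoin_roots] at hsf
  haveI : Polynomial.IsSplittingField ℚ Kfield11 Stmt11Aux.P := hsf
  exact ⟨(Polynomial.IsSplittingField.algEquiv Kfield11 Stmt11Aux.P).symm⟩
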